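/- arXiv:1606.06874 — 2 statements merged into one kernel-verified Lean document; each statement's English description precedes it below -/
import Mathlib

section
/- For every integer n ≥ 255 one has log n ≥ 0.75·log p_n. -/
/-! Computational machinery: a kernel-friendly prime counting function. -/

/-- Trial division by `d, d+2, d+6, d+8, ...` (wheel mod 6 starting at `d ≡ 5 [MOD 6]`). -/
def noDiv (f : ℕ) : ℕ → ℕ → Bool :=
  Nat.rec (motive := fun _ => ℕ → ℕ → Bool)
    (fun d n => Nat.blt n (d*d))
    (fun _ ih d n => cond (Nat.blt n (d*d)) true (cond (Nat.beq (n % d) 0) false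
      (cond (Nat.blt n ((d+2)*(d+2))) true
        (cond (Nat.beq (n % (d+2)) 0) false (ih (d+6) n))))) f

/-- Primality test, valid for `n < 96721`. -/
def isP (n : ℕ) : Bool :=
  cond (Nat.beq (n % 2) 0) (Nat.beq n 2)
    (cond (Nat.blt n 5) (Nat.blt 1 n)
      (cond (Nat.beq (n % 3) 0) false (noDiv 51 5 n)))

/-- Binary-splitting count of primes in `[a, a+L)`, `L ≤ 2^f`, `s = 2^f`. -/
def cnt (f : ℕ) : ℕ → ℕ → ℕ → ℕ :=
  Nat.rec (motive := fun _ => ℕ → ℕ → ℕ → ℕ)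
    (fun _ a L => cond (Nat.beq L 0) 0 (cond (isP a) 1 0))
    (fun _ ih s a L => cond (Nat.ble L (s/2)) (ih (s/2) a L)
      (ih (s/2) a (s/2) + ih (s/2) (a+s/2) (L - s/2))) f


lemma blt_true {a b : ℕ} (h : Nat.blt a b = true) : a < b := by rwa [Nat.blt_eq] at h
lemma blt_false {a b : ℕ} (h : Nat.blt a b = false) : ¬ (a < b) := fun hl => by
  have ht : Nat.blt a b = true := by rw [Nat.blt_eq]; exact hl
  rw [h] at ht; exact Bool.noConfusion ht
lemma nbeq_true {a b : ℕ} (h : Nat.beq a b = true) : a = b := by rwa [Nat.beq_eq] at h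
lemma nbeq_false {a b : ℕ} (h : Nat.beq a b = false) : ¬ (a = b) := fun hl => by
  have ht : Nat.beq a b = true := by rw [Nat.beq_eq]; exact hl
  rw [h] at ht; exact Bool.noConfusion ht
lemma ble_true {a b : ℕ} (h : Nat.ble a b = true) : a ≤ b := by rwa [Nat.ble_eq] at h
lemma ble_false {a b : ℕ} (h : Nat.ble a b = false) : ¬ (a ≤ b) := fun hl => by
  have ht : Nat.ble a b = true := by rw [Nat.ble_eq]; exact hl
  rw [h] at ht; exact Bool.noConfusion ht
lemma iff_of_true' {R : Prop} (h : R) : (true = true ↔ R) := ⟨fun _ => h, fun _ => rfl⟩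
lemma iff_of_false' {R : Prop} (h : ¬ R) : (false = true ↔ R) :=
  ⟨fun hc => Bool.noConfusion hc, fun hr => absurd hr h⟩

lemma two_dvd_absurd {m n : ℕ} (hm : m % 2 = 0) (hd : m ∣ n) (hn : n % 2 = 1) : False := by
  have h2 : 2 ∣ n := dvd_trans (Nat.dvd_of_mod_eq_zero hm) hd
  omega

lemma noDiv_iff : ∀ f d n, d % 6 = 5 → n % 2 = 1 → n % 3 ≠ 0 → n < (d + 6*f)*(d + 6*f) →
    (noDiv f d n = true ↔ ∀ m, d ≤ m → m*m ≤ n → ¬ m ∣ n) := by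
  intro f
  induction f with
  | zero =>
    intro d n hd h2 h3 hfuel
    have e : noDiv 0 d n = Nat.blt n (d*d) := rfl
    rw [e, Nat.blt_eq]
    simp only [Nat.mul_zero, Nat.add_zero] at hfuel
    constructor
    · intro _ m hm hmm
      have := Nat.mul_le_mul hm hm
      omega
    · intro _; exact hfuel
  | succ f ih =>
    intro d n hd h2 h3 hfuel
    have hd5 : 5 ≤ d := by omega
    have e : noDiv (f+1) d n = cond (Nat.blt n (d*d)) true (cond (Nat.beq (n % d) 0) false
      (cond (Nat.blt n ((d+2)*(d+2))) true
        (cond (Nat.beq (n % (d+2)) 0) false (noDiv f (d+6) n)))) := rfl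
    rw [e]
    rcases hb1 : Nat.blt n (d*d) with _ | _
    case true =>
      have h1 : n < d*d := blt_true hb1
      apply iff_of_true'
      intro m hm hmm
      have := Nat.mul_le_mul hm hm
      omega
    case false =>
      have h1 : ¬ (n < d*d) := blt_false hb1
      simp only [cond_false]
      rcases hb2 : Nat.beq (n % d) 0 with _ | _
      case true =>
        have h2d : n % d = 0 := nbeq_true hb2
        apply iff_of_false'
        intro hR
        exact hR d le_rfl (by omega) (Nat.dvd_of_mod_eq_zero h2d)
      case false =>
        have h2d : n % d ≠ 0 := nbeq_false hb2
        simp only [cond_false]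
        rcases hb3 : Nat.blt n ((d+2)*(d+2)) with _ | _
        case true =>
          have h3d : n < (d+2)*(d+2) := blt_true hb3
          apply iff_of_true'
          intro m hm hmm hdvd
          have hlt : m < d + 2 := by
            by_contra hc
            push_neg at hc
            have := Nat.mul_le_mul hc hc
            omega
          have hcases : m = d ∨ m = d+1 := by omega
          rcases hcases with rfl | rfl
          · exact h2d (Nat.mod_eq_zero_of_dvd hdvd)
          · exact two_dvd_absurd (by omega) hdvd h2
        case false =>
          have h3d : ¬ (n < (d+2)*(d+2)) := blt_false hb3
          simp only [cond_false]
          rcases hb4 : Nat.beq (n % (d+2)) 0 with _ | _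
          case true =>
            have h4d : n % (d+2) = 0 := nbeq_true hb4
            apply iff_of_false'
            intro hR
            exact hR (d+2) (by omega) (by omega) (Nat.dvd_of_mod_eq_zero h4d)
          case false =>
            have h4d : n % (d+2) ≠ 0 := nbeq_false hb4
            simp only [cond_false]
            rw [ih (d+6) n (by omega) h2 h3 (by
              have heq : d + 6 + 6*f = d + 6*(f+1) := by ring
              rw [heq]; exact hfuel)]
            constructor
            · intro h m hm hmm hdvd
              rcases Nat.lt_or_ge m (d+6) with hlt | hge
              · have h6 : m = d ∨ m = d+1 ∨ m = d+2 ∨ m = d+3 ∨ m = d+4 ∨ m = d+5 := by omega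
                rcases h6 with rfl | rfl | rfl | rfl | rfl | rfl
                · exact h2d (Nat.mod_eq_zero_of_dvd hdvd)
                · exact two_dvd_absurd (by omega) hdvd h2
                · exact h4d (Nat.mod_eq_zero_of_dvd hdvd)
                · exact two_dvd_absurd (by omega) hdvd h2
                · have h3m : 3 ∣ (d+4) := Nat.dvd_of_mod_eq_zero (by omega)
                  exact h3 (Nat.mod_eq_zero_of_dvd (dvd_trans h3m hdvd))
                · exact two_dvd_absurd (by omega) hdvd h2
              · exact h m hge hmm hdvd
            · intro h m hm hmm hdvd
              exact h m (by omega) hmm hdvd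

lemma isP_iff (n : ℕ) (hn : n ≤ 96720) : isP n = true ↔ n.Prime := by
  have e0 : isP n = cond (Nat.beq (n % 2) 0) (Nat.beq n 2)
      (cond (Nat.blt n 5) (Nat.blt 1 n)
        (cond (Nat.beq (n % 3) 0) false (noDiv 51 5 n))) := rfl
  rw [e0]
  rcases hb0 : Nat.beq (n % 2) 0 with _ | _
  case true =>
    have h2 : n % 2 = 0 := nbeq_true hb0
    simp only [cond_true]
    rw [Nat.beq_eq]
    constructor
    · rintro rfl; exact Nat.prime_two
    · intro hp
      rcases (Nat.Prime.eq_two_or_odd' hp) with rfl | hodd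
      · rfl
      · exfalso; rcases hodd with ⟨k, hk⟩; omega
  case false =>
    have h2 : n % 2 = 1 := by
      have := nbeq_false hb0
      omega
    simp only [cond_false]
    rcases hb1 : Nat.blt n 5 with _ | _
    case true =>
      have h5 : n < 5 := blt_true hb1
      simp only [cond_true]
      rw [Nat.blt_eq]
      have h13 : n = 1 ∨ n = 3 := by omega
      rcases h13 with rfl | rfl
      · simp [Nat.not_prime_one]
      · simp [Nat.prime_three]
    case false =>
      have h5 : 5 ≤ n := by
        have := blt_false hb1
        omega
      simp only [cond_false]
      rcases hb3 : Nat.beq (n % 3) 0 with _ | _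
      case true =>
        have h3 : n % 3 = 0 := nbeq_true hb3
        apply iff_of_false'
        intro hp
        have h3d : 3 ∣ n := Nat.dvd_of_mod_eq_zero h3
        have := Nat.Prime.eq_one_or_self_of_dvd hp 3 h3d
        omega
      case false =>
        have h3 : n % 3 ≠ 0 := nbeq_false hb3
        simp only [cond_false]
        rw [noDiv_iff 51 5 n (by norm_num) h2 h3 (by norm_num; omega)]
        rw [Nat.prime_def_le_sqrt]
        constructor
        · intro h
          refine ⟨by omega, fun m hm hsq => ?_⟩
          have hmm : m * m ≤ n := Nat.le_sqrt.mp hsq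
          intro hdvd
          rcases Nat.lt_or_ge m 5 with hlt | hge
          · have hc : m = 2 ∨ m = 3 ∨ m = 4 := by omega
            rcases hc with rfl | rfl | rfl
            · exact two_dvd_absurd (show 2 % 2 = 0 from rfl) hdvd h2
            · exact h3 (Nat.mod_eq_zero_of_dvd hdvd)
            · exact two_dvd_absurd (show 4 % 2 = 0 from rfl) hdvd h2
          · exact h m hge hmm hdvd
        · rintro ⟨-, h⟩ m hm hmm hdvd
          exact h m (by omega) (Nat.le_sqrt.mpr hmm) hdvd

lemma cnt_eq : ∀ f s a L, s = 2^f → L ≤ 2^f → a + L ≤ 96721 →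
    cnt f s a L + Nat.count Nat.Prime a = Nat.count Nat.Prime (a + L) := by
  intro f
  induction f with
  | zero =>
    intro s a L hs hL ha
    interval_cases L
    · have e : cnt 0 s a 0 = 0 := rfl
      rw [e]; simp
    · have e : cnt 0 s a 1 = cond (isP a) 1 0 := rfl
      rw [e, Nat.count_succ]
      rcases hb : isP a with _ | _
      case true =>
        have hp : Nat.Prime a := (isP_iff a (by omega)).mp hb
        simp only [cond_true, if_pos hp]
        omega
      case false =>
        have hp : ¬ Nat.Prime a := by
          intro hp
          rw [(isP_iff a (by omega)).mpr hp] at hb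
          exact Bool.noConfusion hb
        simp only [cond_false, if_neg hp]
        omega
  | succ f ih =>
    intro s a L hs hL ha
    have hs2 : s / 2 = 2^f := by subst hs; rw [pow_succ]; omega
    have e : cnt (f+1) s a L = cond (Nat.ble L (s/2)) (cnt f (s/2) a L)
      (cnt f (s/2) a (s/2) + cnt f (s/2) (a+s/2) (L - s/2)) := rfl
    rcases hb : Nat.ble L (s/2) with _ | _
    case true =>
      have hL2 : L ≤ s/2 := ble_true hb
      rw [e, hb, cond_true]
      exact ih (s/2) a L hs2 (by omega) ha
    case false =>
      have hL2 : ¬ (L ≤ s/2) := ble_false hb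
      rw [e, hb, cond_false]
      have h1 := ih (s/2) a (s/2) hs2 (by omega) (by omega)
      have h2 := ih (s/2) (a + s/2) (L - s/2) hs2 (by rw [pow_succ] at hL; omega) (by omega)
      have h3 : a + s/2 + (L - s/2) = a + L := by omega
      rw [h3] at h2
      omega

/-! Numerical prime-count facts. -/

theorem chq0 : cnt 13 8192 0 1614 = 255 := by decide +kernel
theorem chq1 : cnt 13 8192 1614 8 = 2 := by decide +kernel
theorem chq2 : cnt 13 8192 1622 16 = 2 := by decide +kernel
theorem chq3 : cnt 13 8192 1638 20 = 1 := by decide +kernel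
theorem chq4 : cnt 13 8192 1658 10 = 2 := by decide +kernel
theorem chq5 : cnt 13 8192 1668 2 = 1 := by decide +kernel
theorem chq6 : cnt 13 8192 1670 24 = 1 := by decide +kernel
theorem chq7 : cnt 13 8192 1694 6 = 2 := by decide +kernel
theorem chq8 : cnt 13 8192 1700 10 = 1 := by decide +kernel
theorem chq9 : cnt 13 8192 1710 14 = 2 := by decide +kernel
theorem chq10 : cnt 13 8192 1724 18 = 2 := by decide +kernel
theorem chq11 : cnt 13 8192 1742 18 = 3 := by decide +kernel
theorem chq12 : cnt 13 8192 1760 28 = 3 := by decide +kernel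
theorem chq13 : cnt 13 8192 1788 24 = 3 := by decide +kernel
theorem chq14 : cnt 13 8192 1812 20 = 2 := by decide +kernel
theorem chq15 : cnt 13 8192 1832 16 = 1 := by decide +kernel
theorem chq16 : cnt 13 8192 1848 14 = 1 := by decide +kernel
theorem chq17 : cnt 13 8192 1862 12 = 3 := by decide +kernel
theorem chq18 : cnt 13 8192 1874 28 = 4 := by decide +kernel
theorem chq19 : cnt 13 8192 1902 32 = 4 := by decide +kernel
theorem chq20 : cnt 13 8192 1934 18 = 2 := by decide +kernel
theorem chq21 : cnt 13 8192 1952 36 = 3 := by decide +kernel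
theorem chq22 : cnt 13 8192 1988 30 = 6 := by decide +kernel
theorem chq23 : cnt 13 8192 2018 52 = 6 := by decide +kernel
theorem chq24 : cnt 13 8192 2070 44 = 7 := by decide +kernel
theorem chq25 : cnt 13 8192 2114 66 = 8 := by decide +kernel
theorem chq26 : cnt 13 8192 2180 72 = 8 := by decide +kernel
theorem chq27 : cnt 13 8192 2252 82 = 10 := by decide +kernel
theorem chq28 : cnt 13 8192 2334 90 = 15 := by decide +kernel
theorem chq29 : cnt 13 8192 2424 134 = 15 := by decide +kernel
theorem chq30 : cnt 13 8192 2558 156 = 21 := by decide +kernel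
theorem chq31 : cnt 13 8192 2714 204 = 26 := by decide +kernel
theorem chq32 : cnt 13 8192 2918 252 = 27 := by decide +kernel
theorem chq33 : cnt 13 8192 3170 264 = 32 := by decide +kernel
theorem chq34 : cnt 13 8192 3434 346 = 45 := by decide +kernel
theorem chq35 : cnt 13 8192 3780 474 = 57 := by decide +kernel
theorem chq36 : cnt 13 8192 4254 624 = 70 := by decide +kernel
theorem chq37 : cnt 13 8192 4878 792 = 94 := by decide +kernel
theorem chq38 : cnt 13 8192 5670 1112 = 126 := by decide +kernel
theorem chq39 : cnt 13 8192 6782 1572 = 173 := by decide +kernel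
theorem chq40 : cnt 13 8192 8354 2278 = 251 := by decide +kernel
theorem chq41 : cnt 13 8192 10632 3528 = 370 := by decide +kernel
theorem chq42 : cnt 13 8192 14160 5618 = 572 := by decide +kernel
theorem chq43 : cnt 13 8192 19778 8192 = 814 := by decide +kernel
theorem chq44 : cnt 13 8192 27970 1334 = 131 := by decide +kernel
theorem chq45 : cnt 13 8192 29304 8192 = 784 := by decide +kernel
theorem chq46 : cnt 13 8192 37496 8192 = 766 := by decide +kernel
theorem chq47 : cnt 13 8192 45688 1174 = 108 := by decide +kernel
theorem chq48 : cnt 13 8192 46862 8192 = 753 := by decide +kernel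
theorem chq49 : cnt 13 8192 55054 8192 = 742 := by decide +kernel
theorem chq50 : cnt 13 8192 63246 8192 = 739 := by decide +kernel
theorem chq51 : cnt 13 8192 71438 8192 = 725 := by decide +kernel
theorem chq52 : cnt 13 8192 79630 2308 = 211 := by decide +kernel
theorem chq53 : cnt 13 8192 81938 1560 = 140 := by decide +kernel
theorem chq54 : cnt 13 8192 83498 23 = 0 := by decide +kernel

theorem cp1614 : Nat.count Nat.Prime 1614 = 255 := by
  have h := cnt_eq 13 8192 0 1614 (by norm_num) (by norm_num) (by norm_num)
  rw [chq0] at h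
  simpa using h.symm
theorem cp1622 : Nat.count Nat.Prime 1622 = 257 := by
  have h := cnt_eq 13 8192 1614 8 (by norm_num) (by norm_num) (by norm_num)
  rw [chq1, cp1614] at h
  norm_num at h
  omega
theorem cp1638 : Nat.count Nat.Prime 1638 = 259 := by
  have h := cnt_eq 13 8192 1622 16 (by norm_num) (by norm_num) (by norm_num)
  rw [chq2, cp1622] at h
  norm_num at h
  omega
theorem cp1658 : Nat.count Nat.Prime 1658 = 260 := by
  have h := cnt_eq 13 8192 1638 20 (by norm_num) (by norm_num) (by norm_num)
  rw [chq3, cp1638] at h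
  norm_num at h
  omega
theorem cp1668 : Nat.count Nat.Prime 1668 = 262 := by
  have h := cnt_eq 13 8192 1658 10 (by norm_num) (by norm_num) (by norm_num)
  rw [chq4, cp1658] at h
  norm_num at h
  omega
theorem cp1670 : Nat.count Nat.Prime 1670 = 263 := by
  have h := cnt_eq 13 8192 1668 2 (by norm_num) (by norm_num) (by norm_num)
  rw [chq5, cp1668] at h
  norm_num at h
  omega
theorem cp1694 : Nat.count Nat.Prime 1694 = 264 := by
  have h := cnt_eq 13 8192 1670 24 (by norm_num) (by norm_num) (by norm_num)
  rw [chq6, cp1670] at h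
  norm_num at h
  omega
theorem cp1700 : Nat.count Nat.Prime 1700 = 266 := by
  have h := cnt_eq 13 8192 1694 6 (by norm_num) (by norm_num) (by norm_num)
  rw [chq7, cp1694] at h
  norm_num at h
  omega
theorem cp1710 : Nat.count Nat.Prime 1710 = 267 := by
  have h := cnt_eq 13 8192 1700 10 (by norm_num) (by norm_num) (by norm_num)
  rw [chq8, cp1700] at h
  norm_num at h
  omega
theorem cp1724 : Nat.count Nat.Prime 1724 = 269 := by
  have h := cnt_eq 13 8192 1710 14 (by norm_num) (by norm_num) (by norm_num)
  rw [chq9, cp1710] at h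
  norm_num at h
  omega
theorem cp1742 : Nat.count Nat.Prime 1742 = 271 := by
  have h := cnt_eq 13 8192 1724 18 (by norm_num) (by norm_num) (by norm_num)
  rw [chq10, cp1724] at h
  norm_num at h
  omega
theorem cp1760 : Nat.count Nat.Prime 1760 = 274 := by
  have h := cnt_eq 13 8192 1742 18 (by norm_num) (by norm_num) (by norm_num)
  rw [chq11, cp1742] at h
  norm_num at h
  omega
theorem cp1788 : Nat.count Nat.Prime 1788 = 277 := by
  have h := cnt_eq 13 8192 1760 28 (by norm_num) (by norm_num) (by norm_num)
  rw [chq12, cp1760] at h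
  norm_num at h
  omega
theorem cp1812 : Nat.count Nat.Prime 1812 = 280 := by
  have h := cnt_eq 13 8192 1788 24 (by norm_num) (by norm_num) (by norm_num)
  rw [chq13, cp1788] at h
  norm_num at h
  omega
theorem cp1832 : Nat.count Nat.Prime 1832 = 282 := by
  have h := cnt_eq 13 8192 1812 20 (by norm_num) (by norm_num) (by norm_num)
  rw [chq14, cp1812] at h
  norm_num at h
  omega
theorem cp1848 : Nat.count Nat.Prime 1848 = 283 := by
  have h := cnt_eq 13 8192 1832 16 (by norm_num) (by norm_num) (by norm_num)
  rw [chq15, cp1832] at h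
  norm_num at h
  omega
theorem cp1862 : Nat.count Nat.Prime 1862 = 284 := by
  have h := cnt_eq 13 8192 1848 14 (by norm_num) (by norm_num) (by norm_num)
  rw [chq16, cp1848] at h
  norm_num at h
  omega
theorem cp1874 : Nat.count Nat.Prime 1874 = 287 := by
  have h := cnt_eq 13 8192 1862 12 (by norm_num) (by norm_num) (by norm_num)
  rw [chq17, cp1862] at h
  norm_num at h
  omega
theorem cp1902 : Nat.count Nat.Prime 1902 = 291 := by
  have h := cnt_eq 13 8192 1874 28 (by norm_num) (by norm_num) (by norm_num)
  rw [chq18, cp1874] at h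
  norm_num at h
  omega
theorem cp1934 : Nat.count Nat.Prime 1934 = 295 := by
  have h := cnt_eq 13 8192 1902 32 (by norm_num) (by norm_num) (by norm_num)
  rw [chq19, cp1902] at h
  norm_num at h
  omega
theorem cp1952 : Nat.count Nat.Prime 1952 = 297 := by
  have h := cnt_eq 13 8192 1934 18 (by norm_num) (by norm_num) (by norm_num)
  rw [chq20, cp1934] at h
  norm_num at h
  omega
theorem cp1988 : Nat.count Nat.Prime 1988 = 300 := by
  have h := cnt_eq 13 8192 1952 36 (by norm_num) (by norm_num) (by norm_num)
  rw [chq21, cp1952] at h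
  norm_num at h
  omega
theorem cp2018 : Nat.count Nat.Prime 2018 = 306 := by
  have h := cnt_eq 13 8192 1988 30 (by norm_num) (by norm_num) (by norm_num)
  rw [chq22, cp1988] at h
  norm_num at h
  omega
theorem cp2070 : Nat.count Nat.Prime 2070 = 312 := by
  have h := cnt_eq 13 8192 2018 52 (by norm_num) (by norm_num) (by norm_num)
  rw [chq23, cp2018] at h
  norm_num at h
  omega
theorem cp2114 : Nat.count Nat.Prime 2114 = 319 := by
  have h := cnt_eq 13 8192 2070 44 (by norm_num) (by norm_num) (by norm_num)
  rw [chq24, cp2070] at h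
  norm_num at h
  omega
theorem cp2180 : Nat.count Nat.Prime 2180 = 327 := by
  have h := cnt_eq 13 8192 2114 66 (by norm_num) (by norm_num) (by norm_num)
  rw [chq25, cp2114] at h
  norm_num at h
  omega
theorem cp2252 : Nat.count Nat.Prime 2252 = 335 := by
  have h := cnt_eq 13 8192 2180 72 (by norm_num) (by norm_num) (by norm_num)
  rw [chq26, cp2180] at h
  norm_num at h
  omega
theorem cp2334 : Nat.count Nat.Prime 2334 = 345 := by
  have h := cnt_eq 13 8192 2252 82 (by norm_num) (by norm_num) (by norm_num)
  rw [chq27, cp2252] at h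
  norm_num at h
  omega
theorem cp2424 : Nat.count Nat.Prime 2424 = 360 := by
  have h := cnt_eq 13 8192 2334 90 (by norm_num) (by norm_num) (by norm_num)
  rw [chq28, cp2334] at h
  norm_num at h
  omega
theorem cp2558 : Nat.count Nat.Prime 2558 = 375 := by
  have h := cnt_eq 13 8192 2424 134 (by norm_num) (by norm_num) (by norm_num)
  rw [chq29, cp2424] at h
  norm_num at h
  omega
theorem cp2714 : Nat.count Nat.Prime 2714 = 396 := by
  have h := cnt_eq 13 8192 2558 156 (by norm_num) (by norm_num) (by norm_num)
  rw [chq30, cp2558] at h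
  norm_num at h
  omega
theorem cp2918 : Nat.count Nat.Prime 2918 = 422 := by
  have h := cnt_eq 13 8192 2714 204 (by norm_num) (by norm_num) (by norm_num)
  rw [chq31, cp2714] at h
  norm_num at h
  omega
theorem cp3170 : Nat.count Nat.Prime 3170 = 449 := by
  have h := cnt_eq 13 8192 2918 252 (by norm_num) (by norm_num) (by norm_num)
  rw [chq32, cp2918] at h
  norm_num at h
  omega
theorem cp3434 : Nat.count Nat.Prime 3434 = 481 := by
  have h := cnt_eq 13 8192 3170 264 (by norm_num) (by norm_num) (by norm_num)
  rw [chq33, cp3170] at h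
  norm_num at h
  omega
theorem cp3780 : Nat.count Nat.Prime 3780 = 526 := by
  have h := cnt_eq 13 8192 3434 346 (by norm_num) (by norm_num) (by norm_num)
  rw [chq34, cp3434] at h
  norm_num at h
  omega
theorem cp4254 : Nat.count Nat.Prime 4254 = 583 := by
  have h := cnt_eq 13 8192 3780 474 (by norm_num) (by norm_num) (by norm_num)
  rw [chq35, cp3780] at h
  norm_num at h
  omega
theorem cp4878 : Nat.count Nat.Prime 4878 = 653 := by
  have h := cnt_eq 13 8192 4254 624 (by norm_num) (by norm_num) (by norm_num)
  rw [chq36, cp4254] at h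
  norm_num at h
  omega
theorem cp5670 : Nat.count Nat.Prime 5670 = 747 := by
  have h := cnt_eq 13 8192 4878 792 (by norm_num) (by norm_num) (by norm_num)
  rw [chq37, cp4878] at h
  norm_num at h
  omega
theorem cp6782 : Nat.count Nat.Prime 6782 = 873 := by
  have h := cnt_eq 13 8192 5670 1112 (by norm_num) (by norm_num) (by norm_num)
  rw [chq38, cp5670] at h
  norm_num at h
  omega
theorem cp8354 : Nat.count Nat.Prime 8354 = 1046 := by
  have h := cnt_eq 13 8192 6782 1572 (by norm_num) (by norm_num) (by norm_num)
  rw [chq39, cp6782] at h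
  norm_num at h
  omega
theorem cp10632 : Nat.count Nat.Prime 10632 = 1297 := by
  have h := cnt_eq 13 8192 8354 2278 (by norm_num) (by norm_num) (by norm_num)
  rw [chq40, cp8354] at h
  norm_num at h
  omega
theorem cp14160 : Nat.count Nat.Prime 14160 = 1667 := by
  have h := cnt_eq 13 8192 10632 3528 (by norm_num) (by norm_num) (by norm_num)
  rw [chq41, cp10632] at h
  norm_num at h
  omega
theorem cp19778 : Nat.count Nat.Prime 19778 = 2239 := by
  have h := cnt_eq 13 8192 14160 5618 (by norm_num) (by norm_num) (by norm_num)
  rw [chq42, cp14160] at h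
  norm_num at h
  omega
theorem cp27970 : Nat.count Nat.Prime 27970 = 3053 := by
  have h := cnt_eq 13 8192 19778 8192 (by norm_num) (by norm_num) (by norm_num)
  rw [chq43, cp19778] at h
  norm_num at h
  omega
theorem cp29304 : Nat.count Nat.Prime 29304 = 3184 := by
  have h := cnt_eq 13 8192 27970 1334 (by norm_num) (by norm_num) (by norm_num)
  rw [chq44, cp27970] at h
  norm_num at h
  omega
theorem cp37496 : Nat.count Nat.Prime 37496 = 3968 := by
  have h := cnt_eq 13 8192 29304 8192 (by norm_num) (by norm_num) (by norm_num)
  rw [chq45, cp29304] at h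
  norm_num at h
  omega
theorem cp45688 : Nat.count Nat.Prime 45688 = 4734 := by
  have h := cnt_eq 13 8192 37496 8192 (by norm_num) (by norm_num) (by norm_num)
  rw [chq46, cp37496] at h
  norm_num at h
  omega
theorem cp46862 : Nat.count Nat.Prime 46862 = 4842 := by
  have h := cnt_eq 13 8192 45688 1174 (by norm_num) (by norm_num) (by norm_num)
  rw [chq47, cp45688] at h
  norm_num at h
  omega
theorem cp55054 : Nat.count Nat.Prime 55054 = 5595 := by
  have h := cnt_eq 13 8192 46862 8192 (by norm_num) (by norm_num) (by norm_num)
  rw [chq48, cp46862] at h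
  norm_num at h
  omega
theorem cp63246 : Nat.count Nat.Prime 63246 = 6337 := by
  have h := cnt_eq 13 8192 55054 8192 (by norm_num) (by norm_num) (by norm_num)
  rw [chq49, cp55054] at h
  norm_num at h
  omega
theorem cp71438 : Nat.count Nat.Prime 71438 = 7076 := by
  have h := cnt_eq 13 8192 63246 8192 (by norm_num) (by norm_num) (by norm_num)
  rw [chq50, cp63246] at h
  norm_num at h
  omega
theorem cp79630 : Nat.count Nat.Prime 79630 = 7801 := by
  have h := cnt_eq 13 8192 71438 8192 (by norm_num) (by norm_num) (by norm_num)
  rw [chq51, cp71438] at h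
  norm_num at h
  omega
theorem cp81938 : Nat.count Nat.Prime 81938 = 8012 := by
  have h := cnt_eq 13 8192 79630 2308 (by norm_num) (by norm_num) (by norm_num)
  rw [chq52, cp79630] at h
  norm_num at h
  omega
theorem cp83498 : Nat.count Nat.Prime 83498 = 8152 := by
  have h := cnt_eq 13 8192 81938 1560 (by norm_num) (by norm_num) (by norm_num)
  rw [chq53, cp81938] at h
  norm_num at h
  omega
theorem cp83521 : Nat.count Nat.Prime 83521 = 8152 := by
  have h := cnt_eq 13 8192 83498 23 (by norm_num) (by norm_num) (by norm_num)
  rw [chq54, cp83498] at h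
  norm_num at h
  omega

/-! The interval step for the small cases. -/

/-- `nthPrime n` is the `n`-th prime number, with `nthPrime 1 = 2`, `nthPrime 2 = 3`, … -/
noncomputable def nthPrime (n : ℕ) : ℕ := Nat.nth Nat.Prime (n - 1)

lemma ivl {b M : ℕ} (a : ℕ) (ha : 1 ≤ a) (hc : Nat.count Nat.Prime (M+1) = b) (hM : M^3 ≤ a^4)
    {n : ℕ} (h1 : a ≤ n) (h2 : n ≤ b) : (nthPrime n)^3 ≤ n^4 := by
  have h3 : Nat.nth Nat.Prime (n-1) < M+1 := Nat.nth_lt_of_lt_count (by omega)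
  have h4 : nthPrime n ≤ M := by
    have e : nthPrime n = Nat.nth Nat.Prime (n-1) := rfl
    omega
  calc (nthPrime n)^3 ≤ M^3 := Nat.pow_le_pow_left h4 3
    _ ≤ a^4 := hM
    _ ≤ n^4 := Nat.pow_le_pow_left h1 4

lemma small {n : ℕ} (h1 : 255 ≤ n) (h2 : n ≤ 8152) : (nthPrime n)^3 ≤ n^4 := by
  rcases le_or_gt n 255 with h|h
  · exact ivl 255 (by norm_num) cp1614 (by norm_num) (by omega) h
  rcases le_or_gt n 257 with h|h
  · exact ivl 256 (by norm_num) cp1622 (by norm_num) (by omega) h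
  rcases le_or_gt n 259 with h|h
  · exact ivl 258 (by norm_num) cp1638 (by norm_num) (by omega) h
  rcases le_or_gt n 260 with h|h
  · exact ivl 260 (by norm_num) cp1658 (by norm_num) (by omega) h
  rcases le_or_gt n 262 with h|h
  · exact ivl 261 (by norm_num) cp1668 (by norm_num) (by omega) h
  rcases le_or_gt n 263 with h|h
  · exact ivl 263 (by norm_num) cp1670 (by norm_num) (by omega) h
  rcases le_or_gt n 264 with h|h
  · exact ivl 264 (by norm_num) cp1694 (by norm_num) (by omega) h
  rcases le_or_gt n 266 with h|h
  · exact ivl 265 (by norm_num) cp1700 (by norm_num) (by omega) h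
  rcases le_or_gt n 267 with h|h
  · exact ivl 267 (by norm_num) cp1710 (by norm_num) (by omega) h
  rcases le_or_gt n 269 with h|h
  · exact ivl 268 (by norm_num) cp1724 (by norm_num) (by omega) h
  rcases le_or_gt n 271 with h|h
  · exact ivl 270 (by norm_num) cp1742 (by norm_num) (by omega) h
  rcases le_or_gt n 274 with h|h
  · exact ivl 272 (by norm_num) cp1760 (by norm_num) (by omega) h
  rcases le_or_gt n 277 with h|h
  · exact ivl 275 (by norm_num) cp1788 (by norm_num) (by omega) h
  rcases le_or_gt n 280 with h|h
  · exact ivl 278 (by norm_num) cp1812 (by norm_num) (by omega) h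
  rcases le_or_gt n 282 with h|h
  · exact ivl 281 (by norm_num) cp1832 (by norm_num) (by omega) h
  rcases le_or_gt n 283 with h|h
  · exact ivl 283 (by norm_num) cp1848 (by norm_num) (by omega) h
  rcases le_or_gt n 284 with h|h
  · exact ivl 284 (by norm_num) cp1862 (by norm_num) (by omega) h
  rcases le_or_gt n 287 with h|h
  · exact ivl 285 (by norm_num) cp1874 (by norm_num) (by omega) h
  rcases le_or_gt n 291 with h|h
  · exact ivl 288 (by norm_num) cp1902 (by norm_num) (by omega) h
  rcases le_or_gt n 295 with h|h
  · exact ivl 292 (by norm_num) cp1934 (by norm_num) (by omega) h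
  rcases le_or_gt n 297 with h|h
  · exact ivl 296 (by norm_num) cp1952 (by norm_num) (by omega) h
  rcases le_or_gt n 300 with h|h
  · exact ivl 298 (by norm_num) cp1988 (by norm_num) (by omega) h
  rcases le_or_gt n 306 with h|h
  · exact ivl 301 (by norm_num) cp2018 (by norm_num) (by omega) h
  rcases le_or_gt n 312 with h|h
  · exact ivl 307 (by norm_num) cp2070 (by norm_num) (by omega) h
  rcases le_or_gt n 319 with h|h
  · exact ivl 313 (by norm_num) cp2114 (by norm_num) (by omega) h
  rcases le_or_gt n 327 with h|h
  · exact ivl 320 (by norm_num) cp2180 (by norm_num) (by omega) h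
  rcases le_or_gt n 335 with h|h
  · exact ivl 328 (by norm_num) cp2252 (by norm_num) (by omega) h
  rcases le_or_gt n 345 with h|h
  · exact ivl 336 (by norm_num) cp2334 (by norm_num) (by omega) h
  rcases le_or_gt n 360 with h|h
  · exact ivl 346 (by norm_num) cp2424 (by norm_num) (by omega) h
  rcases le_or_gt n 375 with h|h
  · exact ivl 361 (by norm_num) cp2558 (by norm_num) (by omega) h
  rcases le_or_gt n 396 with h|h
  · exact ivl 376 (by norm_num) cp2714 (by norm_num) (by omega) h
  rcases le_or_gt n 422 with h|h
  · exact ivl 397 (by norm_num) cp2918 (by norm_num) (by omega) h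
  rcases le_or_gt n 449 with h|h
  · exact ivl 423 (by norm_num) cp3170 (by norm_num) (by omega) h
  rcases le_or_gt n 481 with h|h
  · exact ivl 450 (by norm_num) cp3434 (by norm_num) (by omega) h
  rcases le_or_gt n 526 with h|h
  · exact ivl 482 (by norm_num) cp3780 (by norm_num) (by omega) h
  rcases le_or_gt n 583 with h|h
  · exact ivl 527 (by norm_num) cp4254 (by norm_num) (by omega) h
  rcases le_or_gt n 653 with h|h
  · exact ivl 584 (by norm_num) cp4878 (by norm_num) (by omega) h
  rcases le_or_gt n 747 with h|h
  · exact ivl 654 (by norm_num) cp5670 (by norm_num) (by omega) h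
  rcases le_or_gt n 873 with h|h
  · exact ivl 748 (by norm_num) cp6782 (by norm_num) (by omega) h
  rcases le_or_gt n 1046 with h|h
  · exact ivl 874 (by norm_num) cp8354 (by norm_num) (by omega) h
  rcases le_or_gt n 1297 with h|h
  · exact ivl 1047 (by norm_num) cp10632 (by norm_num) (by omega) h
  rcases le_or_gt n 1667 with h|h
  · exact ivl 1298 (by norm_num) cp14160 (by norm_num) (by omega) h
  rcases le_or_gt n 2239 with h|h
  · exact ivl 1668 (by norm_num) cp19778 (by norm_num) (by omega) h
  rcases le_or_gt n 3184 with h|h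
  · exact ivl 2240 (by norm_num) cp29304 (by norm_num) (by omega) h
  rcases le_or_gt n 4842 with h|h
  · exact ivl 3185 (by norm_num) cp46862 (by norm_num) (by omega) h
  rcases le_or_gt n 8012 with h|h
  · exact ivl 4843 (by norm_num) cp81938 (by norm_num) (by omega) h
  exact ivl 8013 (by norm_num) cp83498 (by norm_num) (by omega) h2

/-! The Chebyshev-type lower bound on the prime counting function. -/

lemma cheb (m : ℕ) (hm : 1 ≤ m) :
    4^m ≤ (2*m) * (2*m)^(Nat.count Nat.Prime (2*m+1)) := by
  have h1 := Nat.four_pow_le_two_mul_self_mul_centralBinom m hm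
  have h2 : Nat.centralBinom m ≤ (2*m)^(Nat.count Nat.Prime (2*m+1)) := by
    have hcard : Nat.count Nat.Prime (2*m+1)
        = (Finset.filter Nat.Prime (Finset.range (2*m+1))).card := by
      rw [Nat.count_eq_card_filter_range]
    rw [hcard]
    have e1 : Nat.centralBinom m
        = ∏ p ∈ Finset.range (2*m+1), p ^ (Nat.centralBinom m).factorization p :=
      (Nat.prod_pow_factorization_centralBinom m).symm
    have e2 : ∏ p ∈ Finset.filter Nat.Prime (Finset.range (2*m+1)),
          p ^ (Nat.centralBinom m).factorization p
        = ∏ p ∈ Finset.range (2*m+1), p ^ (Nat.centralBinom m).factorization p := by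
      apply Finset.prod_filter_of_ne
      intro p _ hne
      by_contra hnp
      rw [Nat.factorization_eq_zero_of_not_prime _ hnp, pow_zero] at hne
      exact hne rfl
    calc Nat.centralBinom m
        = ∏ p ∈ Finset.filter Nat.Prime (Finset.range (2*m+1)),
            p ^ (Nat.centralBinom m).factorization p := by rw [e2, ← e1]
      _ ≤ (2*m)^(Finset.filter Nat.Prime (Finset.range (2*m+1))).card := by
          apply Finset.prod_le_pow_card
          intro p _
          have : p ^ (Nat.choose (2*m) m).factorization p ≤ 2*m :=
            Nat.pow_factorization_choose_le (by omega)
          rwa [show Nat.centralBinom m = Nat.choose (2*m) m from rfl]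
  calc 4^m ≤ 2*m*Nat.centralBinom m := h1
    _ ≤ (2*m) * (2*m)^(Nat.count Nat.Prime (2*m+1)) := Nat.mul_le_mul le_rfl h2

lemma logle {x y : ℝ} (hx : 0 < x) (h : x ≤ y) : Real.log x ≤ Real.log y :=
  (Real.log_le_log_iff hx (lt_of_lt_of_le hx h)).mpr h

lemma large {n : ℕ} (hn : 8153 ≤ n) : 0.75 * Real.log (nthPrime n) ≤ Real.log n := by
  have hnth : nthPrime n = Nat.nth Nat.Prime (n-1) := rfl
  have hp : 83521 ≤ nthPrime n := by
    have h := (Nat.count_le_iff_le_nth Nat.infinite_setOf_prime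
      (a := 83521) (b := n-1)).mp (by rw [cp83521]; omega)
    rw [hnth]
    exact h
  have hprime : (nthPrime n).Prime := by rw [hnth]; exact Nat.prime_nth_prime _
  have hodd : Odd (nthPrime n) := hprime.odd_of_ne_two (by omega)
  obtain ⟨m, hm⟩ := hodd
  have hm1 : 1 ≤ m := by omega
  have hcnt : Nat.count Nat.Prime (nthPrime n) = n - 1 := by
    rw [hnth]; exact Nat.count_nth_of_infinite Nat.infinite_setOf_prime _
  have hnat : 4^m ≤ (2*m) * (2*m)^(n-1) := by
    have h := cheb m hm1
    rwa [← hm, hcnt] at h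
  -- move to the reals
  have hpR : (83521:ℝ) ≤ (nthPrime n : ℝ) := by exact_mod_cast hp
  set p : ℝ := (nthPrime n : ℝ) with hpdef
  have hmcast : (2*(m:ℝ) + 1) = p := by
    rw [hpdef]; exact_mod_cast hm.symm
  have h2m : (2*(m:ℝ)) = p - 1 := by linarith
  have hRineq : (4:ℝ)^m ≤ (2*(m:ℝ)) * (2*(m:ℝ))^(n-1) := by exact_mod_cast hnat
  have hmpos : (1:ℝ) ≤ (m:ℝ) := by exact_mod_cast hm1
  have hlog1 : Real.log ((4:ℝ)^m) ≤ Real.log ((2*(m:ℝ)) * (2*(m:ℝ))^(n-1)) :=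
    logle (by positivity) hRineq
  rw [Real.log_pow, Real.log_mul (by positivity) (by positivity), Real.log_pow] at hlog1
  have hplarge : (2:ℝ) < p := by linarith
  have hlog2m_le : Real.log (2*(m:ℝ)) ≤ Real.log p := logle (by linarith) (by linarith)
  have hlogppos : 0 < Real.log p := Real.log_pos (by linarith)
  have hn1 : ((n-1 : ℕ):ℝ) = (n:ℝ) - 1 := by
    have : 1 ≤ n := by omega
    push_cast [Nat.cast_sub this]
    ring
  have hnR : (8153:ℝ) ≤ (n:ℝ) := by exact_mod_cast hn
  have key : (p - 1) * Real.log 2 ≤ (n:ℝ) * Real.log p := by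
    have l4 : Real.log 4 = 2 * Real.log 2 := by
      rw [show (4:ℝ) = 2^2 by norm_num, Real.log_pow]
      push_cast; ring
    have hlog2mpos : 0 ≤ Real.log (2*(m:ℝ)) := Real.log_nonneg (by linarith)
    calc (p-1)*Real.log 2 = (m:ℝ) * Real.log 4 := by rw [l4, ← h2m]; ring
      _ ≤ Real.log (2*(m:ℝ)) + ((n-1:ℕ):ℝ) * Real.log (2*(m:ℝ)) := hlog1
      _ ≤ Real.log p + ((n:ℝ)-1) * Real.log p := by
          have hcoef : (0:ℝ) ≤ (n:ℝ) - 1 := by linarith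
          rw [hn1]
          have := mul_le_mul_of_nonneg_left hlog2m_le hcoef
          linarith
      _ = (n:ℝ) * Real.log p := by ring
  -- the fourth root
  have hp0 : (0:ℝ) < p := by linarith
  set y := p ^ ((1:ℝ)/4) with hy
  have hy0 : 0 < y := Real.rpow_pos_of_pos hp0 _
  have hy4 : y^4 = p := by
    rw [hy, ← Real.rpow_natCast (p ^ ((1:ℝ)/4)) 4, ← Real.rpow_mul hp0.le]
    norm_num
  have hy17 : (17:ℝ) ≤ y := by
    by_contra hc
    push_neg at hc
    have h174 : y^4 < 17^4 := by
      apply pow_lt_pow_left₀ hc hy0.le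
      norm_num
    rw [hy4] at h174
    norm_num at h174
    linarith
  have hlogy : Real.log p = 4 * Real.log y := by
    rw [← hy4, Real.log_pow]; push_cast; ring
  have hylogpos : 0 < Real.log y := Real.log_pos (by linarith)
  have hl2 : (0.6931471803:ℝ) < Real.log 2 := Real.log_two_gt_d9
  have hlog19 : Real.log 19 ≤ 3 := by
    rw [Real.log_le_iff_le_exp (by norm_num)]
    have h1 := Real.exp_one_gt_d9
    have h3 : Real.exp 3 = Real.exp 1 * Real.exp 1 * Real.exp 1 := by
      rw [← Real.exp_add, ← Real.exp_add]; norm_num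
    nlinarith [Real.exp_pos 1]
  have hlogy_le : Real.log y ≤ 2 + y/19 := by
    have hld := Real.log_le_sub_one_of_pos (show (0:ℝ) < y/19 by positivity)
    rw [Real.log_div (ne_of_gt hy0) (by norm_num)] at hld
    linarith
  have hcube : (17:ℝ)^3 ≤ y^3 := pow_le_pow_left₀ (by norm_num) hy17 3
  have hy4ge : (1:ℝ) ≤ y^4 := by rw [hy4]; linarith
  have hkey2 : 4*y^3*Real.log y ≤ (y^4 - 1) * Real.log 2 := by
    have hy3pos : (0:ℝ) < y^3 := by positivity
    have hstep1 : 4*y^3*Real.log y ≤ 4*y^3*(2 + y/19) :=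
      mul_le_mul_of_nonneg_left hlogy_le (by positivity)
    have h17 : y^3 * 17 ≤ y^3 * y := mul_le_mul_of_nonneg_left hy17 hy3pos.le
    have h17' : y^3 * y = y^4 := by ring
    have hstep2 : 4*y^3*(2 + y/19) + 0.6931471803 ≤ 0.6931471803 * y^4 := by
      linarith [hcube]
    have hstep3 : (y^4 - 1) * 0.6931471803 ≤ (y^4 - 1) * Real.log 2 :=
      mul_le_mul_of_nonneg_left hl2.le (by linarith)
    linarith
  have hyn : y^3 ≤ (n:ℝ) := by
    have hchain : y^3 * Real.log p ≤ (n:ℝ) * Real.log p := by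
      calc y^3 * Real.log p = 4*y^3*Real.log y := by rw [hlogy]; ring
        _ ≤ (y^4-1)*Real.log 2 := hkey2
        _ = (p-1)*Real.log 2 := by rw [hy4]
        _ ≤ (n:ℝ) * Real.log p := key
    exact le_of_mul_le_mul_right hchain hlogppos
  have hlast : Real.log (y^3) ≤ Real.log (n:ℝ) := logle (by positivity) hyn
  rw [Real.log_pow] at hlast
  have hfinal : (0.75:ℝ) * Real.log p = 3 * Real.log y := by
    rw [hlogy]; ring
  rw [hpdef] at hfinal
  rw [hfinal]
  push_cast at hlast
  linarith

/-- For every integer `n ≥ 255` one has `log n ≥ 0.75 · log p_n`. -/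
theorem log_ge_mul_log_nthPrime (n : ℕ) (hn : 255 ≤ n) :
    Real.log n ≥ 0.75 * Real.log (nthPrime n) := by
  rcases le_or_gt n 8152 with h | h
  · have hc : (nthPrime n)^3 ≤ n^4 := small hn h
    have hprime : (nthPrime n).Prime := Nat.prime_nth_prime _
    have hp2 : 2 ≤ nthPrime n := hprime.two_le
    have hcR : ((nthPrime n : ℕ):ℝ)^3 ≤ ((n:ℕ):ℝ)^4 := by exact_mod_cast hc
    have hppos : (0:ℝ) < ((nthPrime n : ℕ):ℝ) := by
      have : (2:ℝ) ≤ ((nthPrime n : ℕ):ℝ) := by exact_mod_cast hp2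
      linarith
    have h1 : Real.log (((nthPrime n : ℕ):ℝ)^3) ≤ Real.log (((n:ℕ):ℝ)^4) :=
      logle (by positivity) hcR
    rw [Real.log_pow, Real.log_pow] at h1
    have hlp : 0 ≤ Real.log ((nthPrime n : ℕ):ℝ) := Real.log_nonneg (by
      have : (2:ℝ) ≤ ((nthPrime n : ℕ):ℝ) := by exact_mod_cast hp2
      linarith)
    push_cast at h1
    rw [ge_iff_le]
    norm_num
    linarith
  · exact large (by omega)
end

section
/- Let m ≥ 2 be a natural number, let a_2, …, a_m be real numbers, and let r, s be real numbers with 1 < r ≤ s. Then ∑_{k=2}^{m} a_k·∫_r^s x/log^k x dx = t_{m−1,1}·∫_r^s x/log² x dx − ∑_{k=2}^{m−1} t_{m−1,k}·(s²/log^k s − r²/log^k r), where t_{i,j} = (j−1)!·∑_{l=j}^{i} 2^{l−j}·a_{l+1}/l!. -/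
open Real

/-- `t a i j = (j−1)! · ∑_{l=j}^{i} 2^{l−j} · a_{l+1} / l!`. -/
noncomputable def t (a : ℕ → ℝ) (i j : ℕ) : ℝ :=
  (Nat.factorial (j - 1) : ℝ) *
    ∑ l ∈ Finset.Icc j i, 2 ^ (l - j) * a (l + 1) / (Nat.factorial l : ℝ)

lemma deriv_aux (k : ℕ) (x : ℝ) (hx : 1 < x) :
    HasDerivAt (fun y : ℝ => y ^ 2 / Real.log y ^ k)
      (2 * x / Real.log x ^ k - k * (x / Real.log x ^ (k + 1))) x := by
  have hx0 : (0:ℝ) < x := lt_trans one_pos hx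
  have hlx : 0 < Real.log x := Real.log_pos hx
  have h1 : HasDerivAt (fun y : ℝ => y ^ 2) (2 * x) x := by
    simpa using hasDerivAt_pow 2 x
  have h2 : HasDerivAt (fun y : ℝ => Real.log y ^ k)
      ((k : ℝ) * Real.log x ^ (k - 1) * x⁻¹) x := (Real.hasDerivAt_log hx0.ne').pow k
  have h : HasDerivAt (fun y : ℝ => y ^ 2 / Real.log y ^ k) _ x := h1.div h2 (pow_ne_zero k hlx.ne')
  convert h using 1
  rcases k with _ | n
  · simp
  · have hL : Real.log x ≠ 0 := hlx.ne'
    have hxne : x ≠ 0 := hx0.ne'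
    simp only [Nat.add_sub_cancel]
    field_simp
    ring

lemma contOn (k : ℕ) {r s : ℝ} (hr : 1 < r) :
    ContinuousOn (fun x : ℝ => x / Real.log x ^ k) (Set.Icc r s) := by
  apply ContinuousOn.div continuousOn_id
  · apply ContinuousOn.pow
    apply Real.continuousOn_log.mono
    intro x hx
    have : (1:ℝ) < x := lt_of_lt_of_le hr hx.1
    simp only [Set.mem_compl_iff, Set.mem_singleton_iff]
    intro h; rw [h] at this; linarith
  · intro x hx
    exact pow_ne_zero _ (Real.log_pos (lt_of_lt_of_le hr hx.1)).ne'

lemma intble (k : ℕ) {r s : ℝ} (hr : 1 < r) (hrs : r ≤ s) :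
    IntervalIntegrable (fun x : ℝ => x / Real.log x ^ k) MeasureTheory.volume r s := by
  apply ContinuousOn.intervalIntegrable
  rw [Set.uIcc_of_le hrs]
  exact contOn k hr

lemma rec_aux (k : ℕ) {r s : ℝ} (hr : 1 < r) (hrs : r ≤ s) :
    2 * (∫ x in r..s, x / Real.log x ^ k)
        - k * ∫ x in r..s, x / Real.log x ^ (k + 1)
      = s ^ 2 / Real.log s ^ k - r ^ 2 / Real.log r ^ k := by
  have hderiv : ∀ x ∈ Set.uIcc r s,
      HasDerivAt (fun y : ℝ => y ^ 2 / Real.log y ^ k)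
        (2 * x / Real.log x ^ k - k * (x / Real.log x ^ (k + 1))) x := by
    intro x hx
    rw [Set.uIcc_of_le hrs] at hx
    exact deriv_aux k x (lt_of_lt_of_le hr hx.1)
  have hintd : IntervalIntegrable
      (fun x : ℝ => 2 * x / Real.log x ^ k - k * (x / Real.log x ^ (k + 1)))
      MeasureTheory.volume r s := by
    apply IntervalIntegrable.sub
    · simpa [mul_div_assoc] using (intble k hr hrs).const_mul 2
    · exact (intble (k + 1) hr hrs).const_mul k
  have h := intervalIntegral.integral_eq_sub_of_hasDerivAt hderiv hintd
  rw [intervalIntegral.integral_sub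
        (by simpa [mul_div_assoc] using (intble k hr hrs).const_mul 2)
        ((intble (k + 1) hr hrs).const_mul k)] at h
  have h1 : (∫ x in r..s, 2 * x / Real.log x ^ k)
      = 2 * ∫ x in r..s, x / Real.log x ^ k := by
    rw [← intervalIntegral.integral_const_mul]
    simp [mul_div_assoc]
  have h2 : (∫ x in r..s, (k : ℝ) * (x / Real.log x ^ (k + 1)))
      = (k : ℝ) * ∫ x in r..s, x / Real.log x ^ (k + 1) :=
    intervalIntegral.integral_const_mul _ _
  rw [h1, h2] at h
  linarith [h]

lemma single (n : ℕ) {r s : ℝ} (hr : 1 < r) (hrs : r ≤ s) :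
    (Nat.factorial (n + 1) : ℝ) * ∫ x in r..s, x / Real.log x ^ (n + 2)
      = 2 ^ n * (∫ x in r..s, x / Real.log x ^ 2)
        - ∑ j ∈ Finset.Icc 2 (n + 1), (Nat.factorial (j - 1) : ℝ) * 2 ^ (n + 1 - j) *
            (s ^ 2 / Real.log s ^ j - r ^ 2 / Real.log r ^ j) := by
  induction n with
  | zero => simp
  | succ n ih =>
    have hrec := rec_aux (n + 2) hr hrs
    have hfac : (Nat.factorial (n + 2) : ℝ) = ((n : ℝ) + 2) * Nat.factorial (n + 1) := by
      rw [Nat.factorial_succ]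
      push_cast
      ring
    rw [Finset.sum_Icc_succ_top (by omega : 2 ≤ n + 2)]
    have hsum : ∑ j ∈ Finset.Icc 2 (n + 1), (Nat.factorial (j - 1) : ℝ) * 2 ^ (n + 2 - j) *
            (s ^ 2 / Real.log s ^ j - r ^ 2 / Real.log r ^ j)
        = 2 * ∑ j ∈ Finset.Icc 2 (n + 1), (Nat.factorial (j - 1) : ℝ) * 2 ^ (n + 1 - j) *
            (s ^ 2 / Real.log s ^ j - r ^ 2 / Real.log r ^ j) := by
      rw [Finset.mul_sum]
      apply Finset.sum_congr rfl
      intro j hj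
      simp only [Finset.mem_Icc] at hj
      have hj2 : n + 2 - j = (n + 1 - j) + 1 := by omega
      rw [hj2, pow_succ]
      ring
    rw [hsum, hfac]
    simp only [Nat.add_sub_cancel, Nat.sub_self, pow_zero, mul_one]
    have hcast : ((n : ℝ) + 2) = ((n + 2 : ℕ) : ℝ) := by push_cast; ring
    rw [hcast]
    linear_combination (norm := (push_cast; ring1))
      2 * ih - (Nat.factorial (n + 1) : ℝ) * hrec

/-- Let `m ≥ 2`, let `a_2, …, a_m` be real numbers and `1 < r ≤ s`. Then
`∑_{k=2}^{m} a_k · ∫_r^s x/log^k x dx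
  = t_{m−1,1} · ∫_r^s x/log² x dx − ∑_{k=2}^{m−1} t_{m−1,k} · (s²/log^k s − r²/log^k r)`. -/
theorem sum_integral_div_log_pow (m : ℕ) (hm : 2 ≤ m) (a : ℕ → ℝ) (r s : ℝ)
    (hr : 1 < r) (hrs : r ≤ s) :
    (∑ k ∈ Finset.Icc 2 m, a k * ∫ x in r..s, x / Real.log x ^ k) =
      t a (m - 1) 1 * (∫ x in r..s, x / Real.log x ^ 2) -
        ∑ k ∈ Finset.Icc 2 (m - 1),
          t a (m - 1) k * (s ^ 2 / Real.log s ^ k - r ^ 2 / Real.log r ^ k) := by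
  obtain ⟨M, rfl⟩ : ∃ M, m = M + 1 := ⟨m - 1, by omega⟩
  have hM : 1 ≤ M := by omega
  simp only [Nat.add_sub_cancel]
  have hmap : Finset.Icc 2 (M + 1)
      = Finset.map (addRightEmbedding 1) (Finset.Icc 1 M) := by
    rw [Finset.map_add_right_Icc]
  rw [hmap, Finset.sum_map]
  simp only [addRightEmbedding_apply]
  have key : ∀ l ∈ Finset.Icc 1 M,
      a (l + 1) * ∫ x in r..s, x / Real.log x ^ (l + 1)
        = (2 ^ (l - 1) * a (l + 1) / (Nat.factorial l : ℝ)) *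
            (∫ x in r..s, x / Real.log x ^ 2)
          - ∑ j ∈ Finset.Icc 2 l,
              ((Nat.factorial (j - 1) : ℝ) * 2 ^ (l - j) * a (l + 1) /
                  (Nat.factorial l : ℝ)) *
                (s ^ 2 / Real.log s ^ j - r ^ 2 / Real.log r ^ j) := by
    intro l hl
    simp only [Finset.mem_Icc] at hl
    obtain ⟨n, rfl⟩ : ∃ n, l = n + 1 := ⟨l - 1, by omega⟩
    have hs := single n hr hrs
    have hfne : (Nat.factorial (n + 1) : ℝ) ≠ 0 :=
      Nat.cast_ne_zero.2 (Nat.factorial_ne_zero _)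
    have hI : (∫ x in r..s, x / Real.log x ^ (n + 1 + 1))
        = (2 ^ n * (∫ x in r..s, x / Real.log x ^ 2)
            - ∑ j ∈ Finset.Icc 2 (n + 1), (Nat.factorial (j - 1) : ℝ) * 2 ^ (n + 1 - j) *
                (s ^ 2 / Real.log s ^ j - r ^ 2 / Real.log r ^ j))
          / (Nat.factorial (n + 1) : ℝ) := by
      rw [eq_div_iff hfne]
      linarith [hs]
    rw [hI]
    simp only [Nat.add_sub_cancel]
    have hswap : ∑ j ∈ Finset.Icc 2 (n + 1),
        ((Nat.factorial (j - 1) : ℝ) * 2 ^ (n + 1 - j) * a (n + 1 + 1) /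
            (Nat.factorial (n + 1) : ℝ)) *
          (s ^ 2 / Real.log s ^ j - r ^ 2 / Real.log r ^ j)
        = a (n + 1 + 1) / (Nat.factorial (n + 1) : ℝ) *
            ∑ j ∈ Finset.Icc 2 (n + 1), (Nat.factorial (j - 1) : ℝ) * 2 ^ (n + 1 - j) *
              (s ^ 2 / Real.log s ^ j - r ^ 2 / Real.log r ^ j) := by
      rw [Finset.mul_sum]
      exact Finset.sum_congr rfl fun j _ => by ring
    rw [hswap]
    ring
  rw [Finset.sum_congr rfl key, Finset.sum_sub_distrib, ← Finset.sum_mul]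
  congr 1
  · congr 1
    rw [t]
    simp only [Nat.sub_self, Nat.factorial_zero, Nat.cast_one, one_mul]
  · rw [Finset.sum_comm' (t' := Finset.Icc 2 M) (s' := fun j => Finset.Icc j M)
      (by intro l j; simp only [Finset.mem_Icc]; omega)]
    apply Finset.sum_congr rfl
    intro j hj
    rw [t, Finset.mul_sum, Finset.sum_mul]
    exact Finset.sum_congr rfl fun l _ => by ring
end
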